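/- Upper bound on hysteretic squashed entanglement by conditional mutual information given the spectator: For any state ρ_ABCD on H_A ⊗ H_B ⊗ H_C ⊗ H_D, T_sq(A;C|B)_ρ ≤ (1/2)·I(A;C|D)_ρ, where I(A;C|D)_ρ is the quantum conditional mutual information of the marginal ρ_ACD = tr_B(ρ_ABCD). -/

import Mathlib

open scoped ComplexOrder

/-- A density operator (quantum state): positive semidefinite with unit trace. -/
def IsDensity {d : Type*} [Fintype d] (ρ : Matrix d d ℂ) : Prop :=
  ρ.PosSemidef ∧ ρ.trace = 1

/-- Von Neumann entropy `S(ρ) = −tr(ρ log₂ ρ)`, computed via eigenvalues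
(with the convention `0 · log₂ 0 = 0`); junk value `0` on non-Hermitian input. -/
noncomputable def vnEntropy {d : Type*} [Fintype d] [DecidableEq d]
    (ρ : Matrix d d ℂ) : ℝ := by
  classical exact
    if h : ρ.IsHermitian then -∑ i, (h.eigenvalues i) * Real.logb 2 (h.eigenvalues i) else 0

/-- Quantum conditional mutual information `I(x;z|y)_ρ = S(xy) + S(yz) − S(y) − S(xyz)`
for a state on `x ⊗ y ⊗ z` (conditioning on the middle system `y`). -/
noncomputable def qcmi {x y z : Type*} [Fintype x] [Fintype y] [Fintype z]
    [DecidableEq x] [DecidableEq y] [DecidableEq z]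
    (ρ : Matrix (x × y × z) (x × y × z) ℂ) : ℝ :=
  vnEntropy (Matrix.of fun (p q : x × y) => ∑ c, ρ (p.1, p.2, c) (q.1, q.2, c))
  + vnEntropy (Matrix.of fun (p q : y × z) => ∑ a, ρ (a, p.1, p.2) (a, q.1, q.2))
  - vnEntropy (Matrix.of fun (b b' : y) => ∑ a, ∑ c, ρ (a, b, c) (a, b', c))
  - vnEntropy ρ

/-- For a state `σ` on `A ⊗ B ⊗ C ⊗ D ⊗ E`, the conditional mutual information
`I(A;C|BE)_σ`: the spectator `D` is traced out and `BE` is the conditioning system. -/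
noncomputable def qcmiACgivenBE {dA dB dC dD dE : Type*}
    [Fintype dA] [Fintype dB] [Fintype dC] [Fintype dD] [Fintype dE]
    [DecidableEq dA] [DecidableEq dB] [DecidableEq dC] [DecidableEq dE]
    (σ : Matrix ((dA × dB × dC × dD) × dE) ((dA × dB × dC × dD) × dE) ℂ) : ℝ :=
  qcmi (Matrix.of fun (p q : dA × (dB × dE) × dC) =>
    ∑ d : dD, σ ((p.1, p.2.1.1, p.2.2, d), p.2.1.2) ((q.1, q.2.1.1, q.2.2, d), q.2.1.2))

/-- Hysteretic squashed entanglement `T_sq(A;C|B)_ρ` of a state on `A ⊗ B ⊗ C ⊗ D`: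
half the infimum of `I(A;C|BE)_σ` over all state extensions `σ_ABCDE` of `ρ_ABCD`,
over all finite-dimensional extension systems `E`. -/
noncomputable def Tsq {dA dB dC dD : Type*}
    [Fintype dA] [Fintype dB] [Fintype dC] [Fintype dD]
    [DecidableEq dA] [DecidableEq dB] [DecidableEq dC] [DecidableEq dD]
    (ρ : Matrix (dA × dB × dC × dD) (dA × dB × dC × dD) ℂ) : ℝ :=
  sInf { t : ℝ | ∃ (nE : ℕ)
    (σ : Matrix ((dA × dB × dC × dD) × Fin nE) ((dA × dB × dC × dD) × Fin nE) ℂ),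
    IsDensity σ ∧ (Matrix.of fun p q => ∑ e, σ (p, e) (q, e)) = ρ ∧
    t = (1/2) * qcmiACgivenBE σ }

/-- For a state `σ` on `A ⊗ B ⊗ C ⊗ E`, the conditional mutual information
`I(A;C|BE)_σ` with conditioning system `BE`. -/
noncomputable def qcmi3 {dA dB dC dE : Type*}
    [Fintype dA] [Fintype dB] [Fintype dC] [Fintype dE]
    [DecidableEq dA] [DecidableEq dB] [DecidableEq dC] [DecidableEq dE]
    (σ : Matrix ((dA × dB × dC) × dE) ((dA × dB × dC) × dE) ℂ) : ℝ :=
  qcmi (Matrix.of fun (p q : dA × (dB × dE) × dC) =>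
    σ ((p.1, p.2.1.1, p.2.2), p.2.1.2) ((q.1, q.2.1.1, q.2.2), q.2.1.2))

/-- Squashed quantum non-Markovianity `N_sq(A;C|B)_ρ` of a state on `A ⊗ B ⊗ C`:
half the infimum of `I(A;C|BE)_σ` over all state extensions `σ_ABCE` of `ρ_ABC`. -/
noncomputable def Nsq {dA dB dC : Type*}
    [Fintype dA] [Fintype dB] [Fintype dC]
    [DecidableEq dA] [DecidableEq dB] [DecidableEq dC]
    (ρ : Matrix (dA × dB × dC) (dA × dB × dC) ℂ) : ℝ :=
  sInf { t : ℝ | ∃ (nE : ℕ)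
    (σ : Matrix ((dA × dB × dC) × Fin nE) ((dA × dB × dC) × Fin nE) ℂ),
    IsDensity σ ∧ (Matrix.of fun p q => ∑ e, σ (p, e) (q, e)) = ρ ∧
    t = (1/2) * qcmi3 σ }

/-- Choi matrix of a linear map on matrices. -/
noncomputable def choiMatrix {dX dY : Type*} [Fintype dX] [DecidableEq dX] [Fintype dY]
    (Φ : Matrix dX dX ℂ →ₗ[ℂ] Matrix dY dY ℂ) : Matrix (dX × dY) (dX × dY) ℂ :=
  Matrix.of fun p q => Φ (Matrix.single p.1 q.1 1) p.2 q.2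

/-- A quantum channel: completely positive (equivalently, PSD Choi matrix, by Choi's
theorem) and trace-preserving linear map. -/
def IsQuantumChannel {dX dY : Type*} [Fintype dX] [DecidableEq dX] [Fintype dY]
    (Φ : Matrix dX dX ℂ →ₗ[ℂ] Matrix dY dY ℂ) : Prop :=
  (choiMatrix Φ).PosSemidef ∧ ∀ ρ : Matrix dX dX ℂ, (Φ ρ).trace = ρ.trace

/-- `(Φ ⊗ id)` applied to an operator on `X ⊗ R`. -/
noncomputable def applyLeft {dX dY dR : Type*} [Fintype dX] [DecidableEq dX]
    (Φ : Matrix dX dX ℂ →ₗ[ℂ] Matrix dY dY ℂ)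
    (ρ : Matrix (dX × dR) (dX × dR) ℂ) : Matrix (dY × dR) (dY × dR) ℂ :=
  Matrix.of fun p q => ∑ a, ∑ a',
    Φ (Matrix.single a a' 1) p.1 q.1 * ρ (a, p.2) (a', q.2)

/-- `(id ⊗ Φ)` applied to an operator on `R ⊗ X`. -/
noncomputable def applyRight {dX dY dR : Type*} [Fintype dX] [DecidableEq dX]
    (Φ : Matrix dX dX ℂ →ₗ[ℂ] Matrix dY dY ℂ)
    (ρ : Matrix (dR × dX) (dR × dX) ℂ) : Matrix (dR × dY) (dR × dY) ℂ :=
  Matrix.of fun p q => ∑ x, ∑ x',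
    Φ (Matrix.single x x' 1) p.2 q.2 * ρ (p.1, x) (q.1, x')

/-- The square root of a positive semidefinite matrix, as `Matrix.PosSemidef.sqrt` was
defined in the older Mathlib (removed since). -/
noncomputable def Matrix.PosSemidef.sqrt {d : Type*} [Fintype d] [DecidableEq d]
    {A : Matrix d d ℂ} (hA : A.PosSemidef) : Matrix d d ℂ :=
  hA.1.eigenvectorUnitary.1 * Matrix.diagonal ((↑) ∘ (√·) ∘ hA.1.eigenvalues) *
    (star hA.1.eigenvectorUnitary : Matrix d d ℂ)

/-- Trace norm `‖X‖₁ = tr √(XᴴX)`. -/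
noncomputable def traceNorm {d : Type*} [Fintype d] [DecidableEq d]
    (X : Matrix d d ℂ) : ℝ :=
  ((Matrix.posSemidef_conjTranspose_mul_self X).sqrt.trace).re

/-- Fidelity `F(ρ,σ) = (tr|√ρ √σ|)²` (junk value `0` off the PSD cone). -/
noncomputable def fidelity {d : Type*} [Fintype d] [DecidableEq d]
    (ρ σ : Matrix d d ℂ) : ℝ := by
  classical exact
    if h : ρ.PosSemidef ∧ σ.PosSemidef then (traceNorm (h.1.sqrt * h.2.sqrt)) ^ 2 else 0

/-- Binary entropy (base 2), with `h₂(0) = h₂(1) = 0`. -/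
noncomputable def binEnt (p : ℝ) : ℝ :=
  -(p * Real.logb 2 p) - (1 - p) * Real.logb 2 (1 - p)

/-- ABC-marginal of the pure state `|v⟩⟨v|` on `A ⊗ B ⊗ C ⊗ D`. -/
noncomputable def pureMargABC {dA dB dC dD : Type*}
    [Fintype dA] [Fintype dB] [Fintype dC] [Fintype dD]
    (v : (dA × dB × dC × dD) → ℂ) : Matrix (dA × dB × dC) (dA × dB × dC) ℂ :=
  Matrix.of fun p q =>
    ∑ d, v (p.1, p.2.1, p.2.2, d) * (starRingEnd ℂ) (v (q.1, q.2.1, q.2.2, d))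

/-- Convex-roof extension of QCMI: `co(QCMI)[ρ_ABCD]` is half the infimum of
`Σ_i p_i I(A;C|B)_{ψ^i}` over finite pure-state ensembles `{p_i, ψ^i}` for `ρ`. -/
noncomputable def coQCMI {dA dB dC dD : Type*}
    [Fintype dA] [Fintype dB] [Fintype dC] [Fintype dD]
    [DecidableEq dA] [DecidableEq dB] [DecidableEq dC] [DecidableEq dD]
    (ρ : Matrix (dA × dB × dC × dD) (dA × dB × dC × dD) ℂ) : ℝ :=
  sInf { t : ℝ | ∃ (k : ℕ) (p : Fin k → ℝ) (v : Fin k → (dA × dB × dC × dD) → ℂ),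
    (∀ i, 0 ≤ p i) ∧ (∑ i, p i) = 1 ∧
    (∀ i, ∑ a, v i a * (starRingEnd ℂ) (v i a) = 1) ∧
    ρ = ∑ i, (p i : ℂ) • Matrix.of (fun a b => v i a * (starRingEnd ℂ) (v i b)) ∧
    t = (1/2) * ∑ i, p i * qcmi (pureMargABC (v i)) }

open Polynomial Matrix

lemma charpoly_conj_units {n : Type*} [Fintype n] [DecidableEq n]
    (A P Q : Matrix n n ℂ) (hPQ : P * Q = 1) (hQP : Q * P = 1) :
    (P * A * Q).charpoly = A.charpoly := by
  have hmap : ∀ M N : Matrix n n ℂ, (M * N).map (C : ℂ →+* ℂ[X]) =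
      M.map C * N.map C := fun M N => Matrix.map_mul
  have key : charmatrix (P * A * Q) = P.map C * charmatrix A * Q.map C := by
    rw [charmatrix, charmatrix]
    rw [Matrix.mul_sub, Matrix.sub_mul]
    congr 1
    · -- P.map C * scalar X * Q.map C = scalar X
      have : (P.map (C : ℂ →+* ℂ[X])) * Matrix.scalar n (X : ℂ[X]) =
          Matrix.scalar n (X : ℂ[X]) * P.map C := by
        rw [Matrix.scalar_commute _ (fun r => Commute.all _ _)]
      rw [this, Matrix.mul_assoc, ← hmap, hPQ]
      simp [Matrix.scalar]
    · simp only [RingHom.mapMatrix_apply]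
      rw [hmap, hmap]
  rw [Matrix.charpoly, Matrix.charpoly, key, det_mul, det_mul]
  have : det (P.map (C : ℂ →+* ℂ[X])) * det (Q.map C) = 1 := by
    rw [← det_mul, ← hmap, hPQ]
    simp
  calc det (P.map (C : ℂ →+* ℂ[X])) * det (charmatrix A) * det (Q.map C)
      = det (charmatrix A) * (det (P.map (C : ℂ →+* ℂ[X])) * det (Q.map C)) := by ring
    _ = det (charmatrix A) := by rw [this, mul_one]


lemma charpoly_diagonal {n : Type*} [Fintype n] [DecidableEq n] (v : n → ℂ) :
    (diagonal v).charpoly = ∏ i, (X - C (v i)) := by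
  have : charmatrix (diagonal v) = diagonal (fun i => X - C (v i)) := by
    ext i j
    by_cases h : i = j
    · subst h; simp
    · simp [h, charmatrix_apply_ne _ _ _ h]
  rw [Matrix.charpoly, this, det_diagonal]

lemma roots_charpoly_hermitian {n : Type*} [Fintype n] [DecidableEq n]
    {A : Matrix n n ℂ} (hA : A.IsHermitian) :
    A.charpoly.roots = Finset.univ.val.map (fun i => ((hA.eigenvalues i : ℝ) : ℂ)) := by
  have hU := hA.spectral_theorem
  have h1 : (hA.eigenvectorUnitary : Matrix n n ℂ) * (star hA.eigenvectorUnitary : Matrix n n ℂ) = 1 := by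
    exact (Matrix.mem_unitaryGroup_iff).mp hA.eigenvectorUnitary.2
  have h2 : (star hA.eigenvectorUnitary : Matrix n n ℂ) * (hA.eigenvectorUnitary : Matrix n n ℂ) = 1 := by
    exact (Matrix.mem_unitaryGroup_iff').mp hA.eigenvectorUnitary.2
  have hcp : A.charpoly = (diagonal (RCLike.ofReal ∘ hA.eigenvalues) : Matrix n n ℂ).charpoly := by
    conv_lhs => rw [hU]
    exact charpoly_conj_units _ _ _ h1 h2
  rw [hcp, _root_.charpoly_diagonal]
  have : ∏ i, (X - C ((RCLike.ofReal ∘ hA.eigenvalues) i)) =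
      ((Finset.univ.val.map (fun i => ((hA.eigenvalues i : ℝ) : ℂ))).map (fun a => X - C a)).prod := by
    rw [Multiset.map_map, Finset.prod_eq_multiset_prod]
    rfl
  rw [this, roots_multiset_prod_X_sub_C]

lemma sum_g_eigenvalues {n : Type*} [Fintype n] [DecidableEq n]
    {A : Matrix n n ℂ} (hA : A.IsHermitian) (g : ℝ → ℝ) :
    ∑ i, g (hA.eigenvalues i) = (A.charpoly.roots.map (fun z : ℂ => g z.re)).sum := by
  rw [roots_charpoly_hermitian hA, Multiset.map_map]
  rw [Finset.sum_eq_multiset_sum]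
  congr 1

lemma vnEntropy_eq_of_roots {d1 d2 : Type*} [Fintype d1] [DecidableEq d1]
    [Fintype d2] [DecidableEq d2]
    {M1 : Matrix d1 d1 ℂ} {M2 : Matrix d2 d2 ℂ}
    (h1 : M1.IsHermitian) (h2 : M2.IsHermitian) (k l : ℕ)
    (h : M1.charpoly.roots + Multiset.replicate k 0 =
         M2.charpoly.roots + Multiset.replicate l 0) :
    vnEntropy M1 = vnEntropy M2 := by
  set g : ℝ → ℝ := fun t => t * Real.logb 2 t with hg
  have e1 : vnEntropy M1 = -∑ i, g (h1.eigenvalues i) := by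
    rw [vnEntropy, dif_pos h1]
  have e2 : vnEntropy M2 = -∑ i, g (h2.eigenvalues i) := by
    rw [vnEntropy, dif_pos h2]
  rw [e1, e2, sum_g_eigenvalues h1 g, sum_g_eigenvalues h2 g]
  have hs : ∀ (m : Multiset ℂ) (j : ℕ),
      ((m + Multiset.replicate j (0 : ℂ)).map (fun z : ℂ => g z.re)).sum
        = (m.map (fun z : ℂ => g z.re)).sum := by
    intro m j
    rw [Multiset.map_add, Multiset.sum_add, Multiset.map_replicate, Multiset.sum_replicate]
    have : g (Complex.re 0) = 0 := by simp [hg]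
    rw [this, smul_zero, add_zero]
  have := congrArg (fun m : Multiset ℂ => (m.map (fun z : ℂ => g z.re)).sum) h
  rw [hs, hs] at this
  rw [this]

section Sylvester
variable {m n : Type*} [Fintype m] [DecidableEq m] [Fintype n] [DecidableEq n]

local notation "K" => FractionRing (Polynomial ℂ)

lemma charpoly_map_frac (M : Matrix m m ℂ) :
    (algebraMap (Polynomial ℂ) K) M.charpoly =
      Matrix.det ((algebraMap (Polynomial ℂ) K X) • (1 : Matrix m m K)
        - M.map ((algebraMap (Polynomial ℂ) K).comp (Polynomial.C))) := by
  rw [Matrix.charpoly, RingHom.map_det]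
  congr 1
  ext i j
  by_cases h : i = j
  · subst h
    simp [Matrix.charmatrix_apply_eq, Matrix.one_apply, Algebra.smul_def, smul_eq_mul, Matrix.algebraMap_matrix_apply]
  · simp [Matrix.charmatrix_apply_ne _ _ _ h, Matrix.one_apply_ne h]

lemma charpoly_mul_comm_pad (A : Matrix m n ℂ) (B : Matrix n m ℂ) :
    Polynomial.X ^ (Fintype.card n) * (A * B).charpoly
      = Polynomial.X ^ (Fintype.card m) * (B * A).charpoly := by
  have hinj : Function.Injective (algebraMap (Polynomial ℂ) K) :=
    IsFractionRing.injective (Polynomial ℂ) K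
  apply hinj
  set φ := algebraMap (Polynomial ℂ) K with hφ
  set ψ := φ.comp (Polynomial.C) with hψ
  set x : K := φ Polynomial.X with hx
  have hx0 : x ≠ 0 := by
    rw [hx, ← map_zero φ]
    intro h
    exact Polynomial.X_ne_zero (hinj h)
  set A' : Matrix m n K := A.map ψ with hA'
  set B' : Matrix n m K := B.map ψ with hB'
  have hmapAB : (A * B).map (ψ : ℂ →+* K) = A' * B' := Matrix.map_mul
  have hmapBA : (B * A).map (ψ : ℂ →+* K) = B' * A' := Matrix.map_mul
  rw [_root_.map_mul, _root_.map_mul, map_pow, map_pow, charpoly_map_frac, charpoly_map_frac,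
    hmapAB, hmapBA, ← hx]
  have key1 : x • (1 : Matrix m m K) - A' * B'
      = x • ((1 : Matrix m m K) - (x⁻¹ • A') * B') := by
    rw [smul_sub, Matrix.smul_mul, smul_smul, mul_inv_cancel₀ hx0, one_smul]
  have key2 : x • (1 : Matrix n n K) - B' * A'
      = x • ((1 : Matrix n n K) - B' * (x⁻¹ • A')) := by
    rw [smul_sub, Matrix.mul_smul, smul_smul, mul_inv_cancel₀ hx0, one_smul]
  rw [key1, key2, Matrix.det_smul, Matrix.det_smul,
    Matrix.det_one_sub_mul_comm (x⁻¹ • A') B']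
  ring
end Sylvester

section Marg
variable {m n : Type*} [Fintype m] [DecidableEq m] [Fintype n] [DecidableEq n]

/-- Left marginal (partial trace over the second factor) of the pure state given by `w`. -/
noncomputable def pmargL (w : m × n → ℂ) : Matrix m m ℂ :=
  Matrix.of fun i i' => ∑ j, w (i, j) * (starRingEnd ℂ) (w (i', j))

/-- Right marginal of the pure state given by `w`. -/
noncomputable def pmargR (w : m × n → ℂ) : Matrix n n ℂ :=
  Matrix.of fun j j' => ∑ i, w (i, j) * (starRingEnd ℂ) (w (i, j'))

lemma pmargL_eq (w : m × n → ℂ) :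
    pmargL w = (Matrix.of fun i j => w (i, j)) * (Matrix.of fun i j => w (i, j))ᴴ := by
  ext i i'
  simp [pmargL, Matrix.mul_apply, Matrix.conjTranspose_apply]

lemma pmargR_eq (w : m × n → ℂ) :
    pmargR w = (Matrix.of fun i j => w (i, j))ᵀ * ((Matrix.of fun i j => w (i, j))ᵀ)ᴴ := by
  ext j j'
  simp [pmargR, Matrix.mul_apply, Matrix.conjTranspose_apply]

lemma posSemidef_pmargL (w : m × n → ℂ) : (pmargL w).PosSemidef := by
  rw [pmargL_eq]; exact Matrix.posSemidef_self_mul_conjTranspose _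

lemma posSemidef_pmargR (w : m × n → ℂ) : (pmargR w).PosSemidef := by
  rw [pmargR_eq]; exact Matrix.posSemidef_self_mul_conjTranspose _

lemma roots_X_pow_mul_charpoly {d : Type*} [Fintype d] [DecidableEq d]
    (M : Matrix d d ℂ) (k : ℕ) :
    (Polynomial.X ^ k * M.charpoly).roots = M.charpoly.roots + Multiset.replicate k 0 := by
  rw [Polynomial.roots_mul (mul_ne_zero (pow_ne_zero _ Polynomial.X_ne_zero)
    (Matrix.charpoly_monic M).ne_zero), Polynomial.roots_pow, Polynomial.roots_X,
    Multiset.nsmul_singleton, add_comm]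

lemma charpoly_transpose {d : Type*} [Fintype d] [DecidableEq d] (M : Matrix d d ℂ) :
    Mᵀ.charpoly = M.charpoly := by
  have : Matrix.charmatrix Mᵀ = (Matrix.charmatrix M)ᵀ := by
    ext i j
    by_cases h : i = j
    · subst h; simp
    · have h' : j ≠ i := fun hh => h hh.symm
      simp [Matrix.charmatrix_apply_ne _ _ _ h, Matrix.charmatrix_apply_ne _ _ _ h']
  rw [Matrix.charpoly, Matrix.charpoly, this, Matrix.det_transpose]

lemma vnEntropy_pmargL_eq_pmargR (w : m × n → ℂ) :
    vnEntropy (pmargL w) = vnEntropy (pmargR w) := by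
  set W : Matrix m n ℂ := Matrix.of fun i j => w (i, j) with hW
  have hR : pmargR w = (Wᴴ * W)ᵀ := by
    ext j j'
    simp only [pmargR, Matrix.of_apply, Matrix.transpose_apply, Matrix.mul_apply,
      Matrix.conjTranspose_apply]
    exact Finset.sum_congr rfl fun i _ => by
      simp [W, RingHom.coe_coe]
      ring
  have hcp : (pmargR w).charpoly = (Wᴴ * W).charpoly := by
    rw [hR, _root_.charpoly_transpose]
  have hcpL : (pmargL w).charpoly = (W * Wᴴ).charpoly := by rw [pmargL_eq]
  have hpad := charpoly_mul_comm_pad W Wᴴ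
  apply vnEntropy_eq_of_roots (posSemidef_pmargL w).1 (posSemidef_pmargR w).1
    (Fintype.card n) (Fintype.card m)
  rw [hcp, hcpL, ← roots_X_pow_mul_charpoly, ← roots_X_pow_mul_charpoly, hpad]
end Marg

section Klein
variable {d : Type*} [Fintype d] [DecidableEq d]

lemma sum_eigenvalues_eq_one {M : Matrix d d ℂ} (hH : M.IsHermitian)
    (htr : M.trace = 1) : ∑ i, hH.eigenvalues i = 1 := by
  have h1 : M.trace = ∑ i, ((hH.eigenvalues i : ℝ) : ℂ) := by
    conv_lhs => rw [hH.spectral_theorem]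
    rw [Unitary.conjStarAlgAut_apply, Matrix.trace_mul_cycle]
    rw [(Matrix.mem_unitaryGroup_iff').mp hH.eigenvectorUnitary.2, Matrix.one_mul]
    simp [Matrix.trace, Matrix.diagonal]
  rw [htr] at h1
  have := congrArg Complex.re h1
  simpa using this.symm

lemma klein_bound {M : Matrix d d ℂ} (hM : M.PosSemidef) (htr : M.trace = 1)
    (V : Matrix d d ℂ) (hV : V ∈ Matrix.unitaryGroup d ℂ)
    (q : d → ℝ) (hq0 : ∀ j, 0 ≤ q j) (hq1 : ∑ j, q j ≤ 1)
    (hsupp : ∀ j, q j = 0 → (Vᴴ * M * V) j j = 0) :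
    vnEntropy M ≤ -∑ j, ((Vᴴ * M * V) j j).re * Real.logb 2 (q j) := by
  have hH := hM.1
  set U : Matrix d d ℂ := (hH.eigenvectorUnitary : Matrix d d ℂ) with hU
  set lam := hH.eigenvalues with hlam
  set T : Matrix d d ℂ := Uᴴ * V with hT
  set c : d → d → ℝ := fun i j => Complex.normSq (T i j) with hc
  have hc0 : ∀ i j, 0 ≤ c i j := fun i j => Complex.normSq_nonneg _
  have hUU' : U * Uᴴ = 1 := by
    simpa [Matrix.star_eq_conjTranspose] using (Matrix.mem_unitaryGroup_iff).mp hH.eigenvectorUnitary.2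
  have hUU : Uᴴ * U = 1 := by
    simpa [Matrix.star_eq_conjTranspose] using (Matrix.mem_unitaryGroup_iff').mp hH.eigenvectorUnitary.2
  have hVV' : V * Vᴴ = 1 := by
    simpa [Matrix.star_eq_conjTranspose] using (Matrix.mem_unitaryGroup_iff).mp hV
  have hVV : Vᴴ * V = 1 := by
    simpa [Matrix.star_eq_conjTranspose] using (Matrix.mem_unitaryGroup_iff').mp hV
  have hTT' : T * Tᴴ = 1 := by
    rw [hT, Matrix.conjTranspose_mul, Matrix.conjTranspose_conjTranspose,
      Matrix.mul_assoc, ← Matrix.mul_assoc V, hVV', Matrix.one_mul, hUU]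
  have hTT : Tᴴ * T = 1 := by
    rw [hT, Matrix.conjTranspose_mul, Matrix.conjTranspose_conjTranspose,
      Matrix.mul_assoc, ← Matrix.mul_assoc U, hUU', Matrix.one_mul, hVV]
  have hrow : ∀ i, ∑ j, c i j = 1 := by
    intro i
    have h1 := congrFun (congrFun hTT' i) i
    rw [Matrix.mul_apply] at h1
    have h2 : (∑ j, T i j * star (T i j)) = 1 := by
      simpa [Matrix.conjTranspose_apply, Matrix.one_apply] using h1
    have h3 := congrArg Complex.re h2
    simpa [Complex.re_sum, Complex.star_def, Complex.mul_conj, hc] using h3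
  have hcol : ∀ j, ∑ i, c i j = 1 := by
    intro j
    have h1 := congrFun (congrFun hTT j) j
    rw [Matrix.mul_apply] at h1
    have h2 : (∑ i, star (T i j) * T i j) = 1 := by
      simpa [Matrix.conjTranspose_apply, Matrix.one_apply] using h1
    have h3 := congrArg Complex.re h2
    simp only [Complex.re_sum] at h3
    have h4 : ∀ i, (star (T i j) * T i j).re = c i j := by
      intro i
      rw [mul_comm]
      simp [Complex.star_def, Complex.mul_conj, hc]
    simp_rw [h4] at h3
    simpa using h3
  have hr : ∀ j, ((Vᴴ * M * V) j j).re = ∑ i, lam i * c i j := by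
    intro j
    have hM' : M = U * Matrix.diagonal (RCLike.ofReal ∘ lam) * Uᴴ := hH.spectral_theorem
    have hstep : Vᴴ * M * V = Tᴴ * Matrix.diagonal ((RCLike.ofReal ∘ lam : d → ℂ)) * T := by
      rw [hM', hT, Matrix.conjTranspose_mul, Matrix.conjTranspose_conjTranspose]
      simp only [Matrix.mul_assoc]
    rw [hstep, Matrix.mul_apply]
    have hTD : ∀ i, (Tᴴ * Matrix.diagonal ((RCLike.ofReal ∘ lam : d → ℂ))) j i
        = star (T i j) * (lam i : ℂ) := by
      intro i
      rw [Matrix.mul_apply, Finset.sum_eq_single i]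
      · simp [Matrix.conjTranspose_apply, Matrix.diagonal]
      · intro b _ hb
        simp [Matrix.diagonal_apply_ne _ hb]
      · simp
    simp_rw [hTD, Complex.re_sum]
    apply Finset.sum_congr rfl
    intro i _
    have he : star (T i j) * (lam i : ℂ) * T i j = (lam i : ℂ) * (T i j * star (T i j)) := by ring
    rw [he]
    simp [Complex.star_def, Complex.mul_conj, hc]
  have hlam0 : ∀ i, 0 ≤ lam i := hM.eigenvalues_nonneg
  have hlam1 : ∑ i, lam i = 1 := sum_eigenvalues_eq_one hH htr
  have hsupp' : ∀ i j, q j = 0 → lam i * c i j = 0 := by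
    intro i j hqj
    have h0 : ((Vᴴ * M * V) j j).re = 0 := by rw [hsupp j hqj]; rfl
    rw [hr j] at h0
    exact (Finset.sum_eq_zero_iff_of_nonneg
      (fun i _ => mul_nonneg (hlam0 i) (hc0 i j))).mp h0 i (Finset.mem_univ i)
  have key : ∑ i, ∑ j, lam i * c i j * (Real.log (q j) - Real.log (lam i)) ≤ 0 := by
    have pair : ∀ i j, lam i * c i j * (Real.log (q j) - Real.log (lam i))
        ≤ c i j * q j - lam i * c i j := by
      intro i j
      rcases eq_or_lt_of_le (hlam0 i) with h0 | hpos
      · rw [← h0]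
        simpa using mul_nonneg (hc0 i j) (hq0 j)
      rcases eq_or_lt_of_le (hc0 i j) with hc0' | hcpos
      · rw [← hc0']; simp
      rcases eq_or_lt_of_le (hq0 j) with hq0' | hqpos
      · exfalso
        have h1 := hsupp' i j hq0'.symm
        have h2 : 0 < lam i * c i j := mul_pos hpos hcpos
        linarith
      · have hlog : Real.log (q j) - Real.log (lam i) = Real.log (q j / lam i) := by
          rw [Real.log_div (ne_of_gt hqpos) (ne_of_gt hpos)]
        have hle : Real.log (q j / lam i) ≤ q j / lam i - 1 :=
          Real.log_le_sub_one_of_pos (div_pos hqpos hpos)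
        rw [hlog]
        calc lam i * c i j * Real.log (q j / lam i)
            ≤ lam i * c i j * (q j / lam i - 1) :=
              mul_le_mul_of_nonneg_left hle (le_of_lt (mul_pos hpos hcpos))
          _ = c i j * q j - lam i * c i j := by
              field_simp
    calc ∑ i, ∑ j, lam i * c i j * (Real.log (q j) - Real.log (lam i))
        ≤ ∑ i, ∑ j, (c i j * q j - lam i * c i j) := by
          apply Finset.sum_le_sum; intro i _
          apply Finset.sum_le_sum; intro j _
          exact pair i j
      _ = (∑ j, q j) - 1 := by
          simp_rw [Finset.sum_sub_distrib]
          congr 1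
          · rw [Finset.sum_comm]
            apply Finset.sum_congr rfl
            intro j _
            rw [← Finset.sum_mul, hcol j, one_mul]
          · have : ∀ i, ∑ j, lam i * c i j = lam i := by
              intro i
              rw [← Finset.mul_sum, hrow i, mul_one]
            simp_rw [this, hlam1]
      _ ≤ 0 := by linarith
  have hlog2 : (0:ℝ) < Real.log 2 := Real.log_pos (by norm_num)
  have final : ∑ i, ∑ j, lam i * c i j * (Real.logb 2 (q j) - Real.logb 2 (lam i)) ≤ 0 := by
    have heq : ∀ i j, lam i * c i j * (Real.logb 2 (q j) - Real.logb 2 (lam i))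
        = (lam i * c i j * (Real.log (q j) - Real.log (lam i))) / Real.log 2 := by
      intro i j
      rw [Real.logb, Real.logb]
      ring
    simp_rw [heq, ← Finset.sum_div]
    exact div_nonpos_of_nonpos_of_nonneg key (le_of_lt hlog2)
  rw [vnEntropy, dif_pos hH]
  simp_rw [hr]
  rw [neg_le_neg_iff]
  have expand1 : ∑ j, (∑ i, lam i * c i j) * Real.logb 2 (q j)
      = ∑ i, ∑ j, lam i * c i j * Real.logb 2 (q j) := by
    rw [Finset.sum_comm]
    apply Finset.sum_congr rfl
    intro j _
    rw [Finset.sum_mul]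
  have expand2 : ∑ i, lam i * Real.logb 2 (lam i)
      = ∑ i, ∑ j, lam i * c i j * Real.logb 2 (lam i) := by
    apply Finset.sum_congr rfl
    intro i _
    have : ∀ j, lam i * c i j * Real.logb 2 (lam i)
        = c i j * (lam i * Real.logb 2 (lam i)) := by intro j; ring
    simp_rw [this, ← Finset.sum_mul, hrow i, one_mul]
  rw [expand1, expand2]
  have := final
  simp_rw [mul_sub, Finset.sum_sub_distrib] at this
  linarith
end Klein

section SA
variable {X Y : Type*} [Fintype X] [DecidableEq X] [Fintype Y] [DecidableEq Y]

lemma psd_diag_nonneg {d : Type*} [Fintype d] [DecidableEq d]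
    {N : Matrix d d ℂ} (hN : N.PosSemidef) (p : d) : (0:ℂ) ≤ N p p := by
  exact hN.diag_nonneg

/-- partial trace over the first tensor factor, as a matrix. -/
noncomputable def ptraceL (M : Matrix (X × Y) (X × Y) ℂ) : Matrix Y Y ℂ :=
  Matrix.of fun y y' => ∑ x, M (x, y) (x, y')

lemma ptraceL_posSemidef {M : Matrix (X × Y) (X × Y) ℂ} (hM : M.PosSemidef) :
    (ptraceL M).PosSemidef := by
  classical
  have hE : ∀ x : X, ((Matrix.of fun (p : X × Y) (y' : Y) =>
      if p = (x, y') then (1:ℂ) else 0)ᴴ * M *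
      (Matrix.of fun (p : X × Y) (y' : Y) => if p = (x, y') then (1:ℂ) else 0))
      = Matrix.of fun y y' => M (x, y) (x, y') := by
    intro x
    ext y y'
    rw [Matrix.mul_apply]
    rw [Finset.sum_eq_single ((x, y') : X × Y)]
    · rw [Matrix.mul_apply, Finset.sum_eq_single ((x, y) : X × Y)]
      · simp
      · intro b _ hb
        simp [Matrix.conjTranspose_apply, hb]
      · simp
    · intro b _ hb
      simp [hb]
    · simp
  have : ptraceL M = ∑ x : X, ((Matrix.of fun (p : X × Y) (y' : Y) =>
      if p = (x, y') then (1:ℂ) else 0)ᴴ * M *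
      (Matrix.of fun (p : X × Y) (y' : Y) => if p = (x, y') then (1:ℂ) else 0)) := by
    ext y y'
    rw [Matrix.sum_apply]
    simp only [hE]
    simp [ptraceL]
  rw [this]
  refine Finset.sum_induction _ _ (fun a b ha hb => ha.add hb) Matrix.PosSemidef.zero ?_
  intro x _
  exact hM.conjTranspose_mul_mul_same _

lemma ptraceL_trace (M : Matrix (X × Y) (X × Y) ℂ) :
    (ptraceL M).trace = M.trace := by
  simp only [Matrix.trace, Matrix.diag, ptraceL, Matrix.of_apply]
  rw [Finset.sum_comm]
  rw [Fintype.sum_prod_type]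

lemma entropy_le_logcard_add [Nonempty X] (M : Matrix (X × Y) (X × Y) ℂ)
    (hM : M.PosSemidef) (htr : M.trace = 1) :
    vnEntropy M ≤ Real.logb 2 (Fintype.card X) + vnEntropy (ptraceL M) := by
  classical
  set MY := ptraceL M with hMYdef
  have hMYpsd : MY.PosSemidef := ptraceL_posSemidef hM
  have hYH : MY.IsHermitian := hMYpsd.1
  have hMYtr : MY.trace = 1 := by rw [hMYdef, ptraceL_trace, htr]
  set m : Y → ℝ := hYH.eigenvalues with hm
  have hm0 : ∀ j, 0 ≤ m j := hMYpsd.eigenvalues_nonneg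
  have hm1 : ∑ j, m j = 1 := sum_eigenvalues_eq_one hYH hMYtr
  set W : Matrix Y Y ℂ := (hYH.eigenvectorUnitary : Matrix Y Y ℂ) with hW
  have hWW' : W * Wᴴ = 1 := by
    simpa [Matrix.star_eq_conjTranspose] using (Matrix.mem_unitaryGroup_iff).mp hYH.eigenvectorUnitary.2
  have hWW : Wᴴ * W = 1 := by
    simpa [Matrix.star_eq_conjTranspose] using (Matrix.mem_unitaryGroup_iff').mp hYH.eigenvectorUnitary.2
  set V : Matrix (X × Y) (X × Y) ℂ :=
    Matrix.of fun p r => if p.1 = r.1 then W p.2 r.2 else 0 with hV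
  have hVmem : V ∈ Matrix.unitaryGroup (X × Y) ℂ := by
    rw [Matrix.mem_unitaryGroup_iff]
    ext ⟨x, y⟩ ⟨x', y'⟩
    rw [Matrix.mul_apply]
    simp only [Fintype.sum_prod_type]
    by_cases hx : x = x'
    · subst hx
      have : ∀ x'' : X, ∑ y'' : Y, V (x, y) (x'', y'') * (star V) (x'', y'') (x, y')
          = if x'' = x then ∑ y'' : Y, W y y'' * star (W y' y'') else 0 := by
        intro x''
        by_cases h : x'' = x
        · subst h
          simp [hV, Matrix.star_apply]
        · have h2 : ¬ (x = x'') := fun hh => h hh.symm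
          simp [hV, h2, Matrix.star_apply, h]
      simp_rw [this]
      rw [Finset.sum_ite_eq' Finset.univ x
        (fun _ => ∑ y'' : Y, W y y'' * star (W y' y''))]
      simp only [Finset.mem_univ, if_true]
      have := congrFun (congrFun hWW' y) y'
      rw [Matrix.mul_apply] at this
      simp only [Matrix.conjTranspose_apply] at this
      rw [this]
      simp [Matrix.one_apply, Prod.ext_iff]
    · have : ∀ x'' : X, ∑ y'' : Y, V (x, y) (x'', y'') * (star V) (x'', y'') (x', y') = 0 := by
        intro x''
        by_cases h : x = x''
        · subst h
          have h2 : ¬ (x' = x) := fun hh => hx hh.symm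
          simp [hV, Matrix.star_apply, h2]
        · simp [hV, h]
      simp_rw [this]
      simp [Matrix.one_apply, Prod.ext_iff, hx]
  -- the diagonal entries of Vᴴ M V summed over x give eigenvalues of MY
  have hdiagsum : ∀ j, ∑ x, (Vᴴ * M * V) (x, j) (x, j) = ((m j : ℝ) : ℂ) := by
    intro j
    have hdiag : Wᴴ * MY * W = Matrix.diagonal (RCLike.ofReal ∘ m) := by
      have := hYH.conjStarAlgAut_star_eigenvectorUnitary
      simpa [Matrix.star_eq_conjTranspose] using this
    have hentry : ∀ x, (Vᴴ * M * V) (x, j) (x, j)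
        = ∑ y, ∑ y', star (W y j) * M ((x, y)) ((x, y')) * W y' j := by
      intro x
      rw [Matrix.mul_assoc, Matrix.mul_apply]
      have hMV : ∀ p : X × Y, (M * V) p (x, j) = ∑ y', M p (x, y') * W y' j := by
        intro p
        rw [Matrix.mul_apply, Fintype.sum_prod_type]
        rw [Finset.sum_eq_single x]
        · apply Finset.sum_congr rfl
          intro y' _
          congr 1
          simp [hV]
        · intro b _ hb
          apply Finset.sum_eq_zero
          intro y' _
          simp [hV, hb]
        · simp
      simp_rw [hMV]
      rw [Fintype.sum_prod_type]
      rw [Finset.sum_eq_single x]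
      · apply Finset.sum_congr rfl
        intro y _
        have hVapp : Vᴴ (x, j) (x, y) = star (W y j) := by
          simp [hV, Matrix.conjTranspose_apply]
        rw [hVapp, Finset.mul_sum]
        apply Finset.sum_congr rfl
        intro y' _
        ring
      · intro b _ hb
        apply Finset.sum_eq_zero
        intro y _
        simp [hV, Matrix.conjTranspose_apply, hb]
      · simp
    calc ∑ x, (Vᴴ * M * V) (x, j) (x, j)
        = ∑ x, ∑ y, ∑ y', star (W y j) * M ((x, y)) ((x, y')) * W y' j := by
          simp_rw [hentry]
      _ = ∑ y, ∑ y', star (W y j) * MY y y' * W y' j := by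
          rw [Finset.sum_comm]
          apply Finset.sum_congr rfl
          intro y _
          rw [Finset.sum_comm]
          apply Finset.sum_congr rfl
          intro y' _
          simp only [hMYdef, ptraceL, Matrix.of_apply, Finset.sum_mul, Finset.mul_sum]
      _ = (Wᴴ * MY * W) j j := by
          rw [Finset.sum_comm, Matrix.mul_apply]
          apply Finset.sum_congr rfl
          intro y' _
          rw [Matrix.mul_apply, Finset.sum_mul]
          apply Finset.sum_congr rfl
          intro y _
          simp only [Matrix.conjTranspose_apply, Matrix.star_apply]
      _ = ((m j : ℝ) : ℂ) := by rw [hdiag]; simp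
  have hVMV : (Vᴴ * M * V).PosSemidef := hM.conjTranspose_mul_mul_same V
  have hdnn : ∀ p : X × Y, (0:ℂ) ≤ (Vᴴ * M * V) p p := fun p => psd_diag_nonneg hVMV p
  have hcardpos : (0:ℝ) < Fintype.card X := by
    have := Fintype.card_pos (α := X)
    exact_mod_cast this
  set q : X × Y → ℝ := fun p => m p.2 / Fintype.card X with hq
  have hq0 : ∀ p, 0 ≤ q p := fun p => div_nonneg (hm0 p.2) (le_of_lt hcardpos)
  have hq1 : ∑ p, q p ≤ 1 := by
    rw [Fintype.sum_prod_type]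
    simp only [hq]
    rw [Finset.sum_comm]
    have : ∀ j, ∑ _x : X, m j / (Fintype.card X : ℝ) = m j := by
      intro j
      rw [Finset.sum_const, Finset.card_univ, nsmul_eq_mul]
      field_simp
    simp_rw [this]
    rw [hm1]
  have hzero : ∀ p : X × Y, m p.2 = 0 → (Vᴴ * M * V) p p = 0 := by
    rintro ⟨x, j⟩ hmj
    have hsum : ∑ x', (Vᴴ * M * V) (x', j) (x', j) = 0 := by
      rw [hdiagsum j, hmj]
      simp
    have := (Finset.sum_eq_zero_iff_of_nonneg
      (fun x' _ => hdnn ((x', j) : X × Y))).mp hsum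
    exact this x (Finset.mem_univ x)
  have hsupp : ∀ p : X × Y, q p = 0 → (Vᴴ * M * V) p p = 0 := by
    intro p hp
    apply hzero
    have := hp
    rw [hq] at this
    field_simp at this
    simpa using this
  have hK := klein_bound hM htr V hVmem q hq0 hq1 hsupp
  refine le_trans hK ?_
  -- now rewrite the RHS
  have hre : ∀ j, ∑ x, ((Vᴴ * M * V) (x, j) (x, j)).re = m j := by
    intro j
    rw [← Complex.re_sum, hdiagsum j, Complex.ofReal_re]
  have hrnn : ∀ p : X × Y, 0 ≤ ((Vᴴ * M * V) p p).re := by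
    intro p
    exact (Complex.le_def.mp (hdnn p)).1
  have step : ∀ p : X × Y, ((Vᴴ * M * V) p p).re * Real.logb 2 (q p)
      = ((Vᴴ * M * V) p p).re * Real.logb 2 (m p.2)
        - ((Vᴴ * M * V) p p).re * Real.logb 2 (Fintype.card X) := by
    intro p
    by_cases hmp : m p.2 = 0
    · have h0 : (Vᴴ * M * V) p p = 0 := hzero p hmp
      rw [h0]
      simp
    · rw [hq]
      rw [Real.logb_div hmp (ne_of_gt hcardpos)]
      ring
  simp_rw [step, Finset.sum_sub_distrib]
  have hsum1 : ∑ p : X × Y, ((Vᴴ * M * V) p p).re * Real.logb 2 (Fintype.card X)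
      = Real.logb 2 (Fintype.card X) := by
    rw [← Finset.sum_mul (Finset.univ) (fun p : X × Y => ((Vᴴ * M * V) p p).re)
      (Real.logb 2 (Fintype.card X))]
    have htr1 : ∑ p : X × Y, ((Vᴴ * M * V) p p).re = 1 := by
      rw [← Complex.re_sum]
      have : ∑ p : X × Y, (Vᴴ * M * V) p p = (Vᴴ * M * V).trace := rfl
      rw [this]
      rw [Matrix.trace_mul_cycle]
      have hVV' : V * Vᴴ = 1 := by
        simpa [Matrix.star_eq_conjTranspose] using (Matrix.mem_unitaryGroup_iff).mp hVmem
      rw [hVV', Matrix.one_mul, htr]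
      simp
    rw [htr1, one_mul]
  have hsum2 : ∑ p : X × Y, ((Vᴴ * M * V) p p).re * Real.logb 2 (m p.2)
      = ∑ j, m j * Real.logb 2 (m j) := by
    calc ∑ p : X × Y, ((Vᴴ * M * V) p p).re * Real.logb 2 (m p.2)
        = ∑ j, (∑ x, ((Vᴴ * M * V) (x, j) (x, j)).re) * Real.logb 2 (m j) := by
          rw [Fintype.sum_prod_type, Finset.sum_comm]
          apply Finset.sum_congr rfl
          intro j _
          rw [Finset.sum_mul]
      _ = ∑ j, m j * Real.logb 2 (m j) := by simp_rw [hre]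
  rw [hsum1, hsum2]
  have hvnMY : vnEntropy MY = -∑ j, m j * Real.logb 2 (m j) := by
    rw [vnEntropy, dif_pos hYH]
  rw [hvnMY]
  ring_nf
  exact le_refl _
end SA

section LB
variable {x y z : Type*} [Fintype x] [DecidableEq x] [Fintype y] [DecidableEq y]
  [Fintype z] [DecidableEq z]

lemma sqrt_outer {d : Type*} [Fintype d] [DecidableEq d] {τ : Matrix d d ℂ}
    (hτ : τ.PosSemidef) (p q : d) :
    ∑ r, hτ.sqrt p r * (starRingEnd ℂ) (hτ.sqrt q r) = τ p q := by
  set U : Matrix d d ℂ := (hτ.1.eigenvectorUnitary : Matrix d d ℂ) with hU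
  set D : Matrix d d ℂ := Matrix.diagonal ((↑) ∘ (√·) ∘ hτ.1.eigenvalues) with hDdef
  have hs : hτ.sqrt = U * D * star U := rfl
  have hD : Dᴴ = D := by
    ext i j
    by_cases h : i = j
    · subst h; simp [D, Complex.star_def]
    · simp [D, Matrix.diagonal_apply, h, Ne.symm h]
  have hH : (hτ.sqrt)ᴴ = hτ.sqrt := by
    rw [hs, Matrix.star_eq_conjTranspose, Matrix.conjTranspose_mul, Matrix.conjTranspose_mul,
      Matrix.conjTranspose_conjTranspose, hD, Matrix.mul_assoc]
  have hUU : star U * U = 1 := (Matrix.mem_unitaryGroup_iff').mp hτ.1.eigenvectorUnitary.2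
  have hDD : D * D = Matrix.diagonal (RCLike.ofReal ∘ hτ.1.eigenvalues) := by
    rw [hDdef, Matrix.diagonal_mul_diagonal]
    congr 1
    funext i
    simp only [Function.comp_apply]
    rw [← Complex.ofReal_mul, Real.mul_self_sqrt (hτ.eigenvalues_nonneg i)]
    rfl
  have hsq : hτ.sqrt * hτ.sqrt = τ := by
    rw [hs, show U * D * star U * (U * D * star U) = U * D * (star U * U) * D * star U by
      simp only [Matrix.mul_assoc], hUU, Matrix.mul_one, Matrix.mul_assoc U D D, hDD]
    exact hτ.1.spectral_theorem.symm
  have : ∀ r, (starRingEnd ℂ) (hτ.sqrt q r) = hτ.sqrt r q := by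
    intro r
    have := congrFun (congrFun hH r) q
    rw [Matrix.conjTranspose_apply] at this
    exact this
  simp_rw [this]
  have := congrFun (congrFun hsq p) q
  rw [Matrix.mul_apply] at this
  exact this

lemma qcmi_ge_neg_two_logcard (τ : Matrix (x × y × z) (x × y × z) ℂ)
    (hτ : τ.PosSemidef) (htr : τ.trace = 1) (hx : Nonempty x) :
    -2 * Real.logb 2 (Fintype.card x) ≤ qcmi τ := by
  classical
  set w : (x × y × z) × (x × y × z) → ℂ := fun u => hτ.sqrt u.1 u.2 with hw
  have key : ∀ p q : x × y × z, ∑ r, w (p, r) * (starRingEnd ℂ) (w (q, r)) = τ p q :=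
    fun p q => sqrt_outer hτ p q
  -- h4 : S(xyz) ≤ log|x| + S(yz)
  have h4 : vnEntropy τ ≤ Real.logb 2 (Fintype.card x)
      + vnEntropy (Matrix.of fun (p q : y × z) => ∑ a, τ (a, p.1, p.2) (a, q.1, q.2)) := by
    have h := entropy_le_logcard_add (X := x) (Y := y × z) τ hτ htr
    have hmatch : ptraceL (X := x) (Y := y × z) τ
        = Matrix.of fun (p q : y × z) => ∑ a, τ (a, p.1, p.2) (a, q.1, q.2) := by
      ext ⟨b, c⟩ ⟨b', c'⟩
      rfl
    rwa [hmatch] at h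
  -- h3 : S(y) ≤ log|x| + S(xy)
  set w' : y × (x × (z × (x × y × z))) → ℂ :=
    fun u => w ((u.2.1, u.1, u.2.2.1), u.2.2.2) with hw'
  set w'' : (x × y) × (z × (x × y × z)) → ℂ :=
    fun u => w ((u.1.1, u.1.2, u.2.1), u.2.2) with hw''
  have e3L : (Matrix.of fun (b b' : y) => ∑ a, ∑ c, τ (a, b, c) (a, b', c)) = pmargL w' := by
    ext b b'
    show (∑ a, ∑ c, τ (a, b, c) (a, b', c))
      = ∑ j : x × (z × (x × y × z)), w' (b, j) * (starRingEnd ℂ) (w' (b', j))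
    rw [Fintype.sum_prod_type]
    apply Finset.sum_congr rfl
    intro a _
    rw [Fintype.sum_prod_type]
    apply Finset.sum_congr rfl
    intro c _
    exact (key (a, b, c) (a, b', c)).symm
  have e1 : (Matrix.of fun (p q : x × y) => ∑ c, τ (p.1, p.2, c) (q.1, q.2, c)) = pmargL w'' := by
    ext p q
    show (∑ c, τ (p.1, p.2, c) (q.1, q.2, c))
      = ∑ j : z × (x × y × z), w'' (p, j) * (starRingEnd ℂ) (w'' (q, j))
    rw [Fintype.sum_prod_type]
    apply Finset.sum_congr rfl
    intro c _
    exact (key (p.1, p.2, c) (q.1, q.2, c)).symm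
  have e3R : ptraceL (X := x) (Y := z × (x × y × z)) (pmargR w') = pmargR w'' := by
    ext v v'
    show (∑ a, ∑ b, w' (b, (a, v)) * (starRingEnd ℂ) (w' (b, (a, v'))))
      = ∑ i : x × y, w'' (i, v) * (starRingEnd ℂ) (w'' (i, v'))
    rw [Fintype.sum_prod_type]
  have htrΩ : (pmargR w').trace = 1 := by
    have expand : (pmargR w').trace
        = ∑ u : (x × (z × (x × y × z))) × y, w' (u.2, u.1) * (starRingEnd ℂ) (w' (u.2, u.1)) := by
      rw [Fintype.sum_prod_type]
      simp only [Matrix.trace, Matrix.diag, pmargR, Matrix.of_apply]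
    rw [expand]
    have := Fintype.sum_equiv
      (⟨fun (u : (x × (z × (x × y × z))) × y) => (((u.1.1, u.2, u.1.2.1), u.1.2.2) :
          (x × y × z) × (x × y × z)),
        fun v => ((v.1.1, (v.1.2.2, v.2)), v.1.2.1),
        by rintro ⟨⟨a, c, r⟩, b⟩; rfl,
        by rintro ⟨⟨a, b, c⟩, r⟩; rfl⟩ : ((x × (z × (x × y × z))) × y) ≃ ((x × y × z) × (x × y × z)))
      (fun u => w' (u.2, u.1) * (starRingEnd ℂ) (w' (u.2, u.1)))
      (fun v => w v * (starRingEnd ℂ) (w v))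
      (by rintro ⟨⟨a, c, r⟩, b⟩; rfl)
    rw [this]
    have : ∑ v : (x × y × z) × (x × y × z), w v * (starRingEnd ℂ) (w v)
        = ∑ p : x × y × z, τ p p := by
      rw [Fintype.sum_prod_type]
      apply Finset.sum_congr rfl
      intro p _
      exact key p p
    rw [this]
    exact htr
  have h3 : vnEntropy (Matrix.of fun (b b' : y) => ∑ a, ∑ c, τ (a, b, c) (a, b', c))
      ≤ Real.logb 2 (Fintype.card x)
        + vnEntropy (Matrix.of fun (p q : x × y) => ∑ c, τ (p.1, p.2, c) (q.1, q.2, c)) := by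
    rw [e3L, e1, vnEntropy_pmargL_eq_pmargR w', vnEntropy_pmargL_eq_pmargR w'']
    have h := entropy_le_logcard_add (X := x) (Y := z × (x × y × z)) (pmargR w')
      (posSemidef_pmargR w') htrΩ
    rwa [e3R] at h
  rw [qcmi]
  linarith
end LB

section Aux

lemma nonempty_of_trace_one {d : Type*} [Fintype d] {M : Matrix d d ℂ}
    (h : M.trace = 1) : Nonempty d := by
  by_contra hne
  rw [not_nonempty_iff] at hne
  rw [Matrix.trace] at h
  rw [Finset.sum_eq_zero (fun i _ => absurd (Finset.mem_univ i) (by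
    intro _; exact hne.false i))] at h
  exact one_ne_zero h.symm

lemma posSemidef_outer {d : Type*} [Fintype d] [DecidableEq d] (v : d → ℂ) :
    (Matrix.of fun p q => v p * (starRingEnd ℂ) (v q)).PosSemidef := by
  have h : (Matrix.of fun p q => v p * (starRingEnd ℂ) (v q)) =
      (Matrix.replicateCol Unit v) * (Matrix.replicateCol Unit v)ᴴ := by
    ext p q
    simp [Matrix.mul_apply, Matrix.replicateCol, Matrix.conjTranspose_apply, Complex.star_def]
  rw [h]
  exact Matrix.posSemidef_self_mul_conjTranspose _

lemma posSemidef_comp_sum {α β γ : Type*} [Fintype α] [DecidableEq α]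
    [Fintype β] [DecidableEq β] [Fintype γ]
    {σ : Matrix α α ℂ} (hσ : σ.PosSemidef) (f : β → γ → α) :
    (Matrix.of fun p q : β => ∑ d : γ, σ (f p d) (f q d)).PosSemidef := by
  classical
  have hE : ∀ d : γ, ((Matrix.of fun (u : α) (p : β) =>
      if u = f p d then (1:ℂ) else 0)ᴴ * σ *
      (Matrix.of fun (u : α) (p : β) => if u = f p d then (1:ℂ) else 0))
      = Matrix.of fun p q => σ (f p d) (f q d) := by
    intro d
    ext p q
    rw [Matrix.mul_apply]
    rw [Finset.sum_eq_single (f q d)]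
    · rw [Matrix.mul_apply, Finset.sum_eq_single (f p d)]
      · simp
      · intro b _ hb
        simp [Matrix.conjTranspose_apply, hb]
      · simp
    · intro b _ hb
      simp [hb]
    · simp
  have heq : (Matrix.of fun p q : β => ∑ d : γ, σ (f p d) (f q d))
      = ∑ d : γ, ((Matrix.of fun (u : α) (p : β) =>
        if u = f p d then (1:ℂ) else 0)ᴴ * σ *
        (Matrix.of fun (u : α) (p : β) => if u = f p d then (1:ℂ) else 0)) := by
    ext p q
    rw [Matrix.sum_apply]
    simp only [hE]
    simp
  rw [heq]
  refine Finset.sum_induction _ _ (fun a b ha hb => ha.add hb) Matrix.PosSemidef.zero ?_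
  intro d _
  exact hσ.conjTranspose_mul_mul_same _
end Aux


/-- **Upper bound by the conditional mutual information given the spectator:**
`T_sq(A;C|B)_ρ ≤ (1/2) I(A;C|D)_ρ`, where `I(A;C|D)` is the QCMI of the marginal
`ρ_ACD = tr_B(ρ_ABCD)` (conditioning on `D`). -/
theorem Tsq_le_half_qcmi_spectator {dA dB dC dD : Type*}
    [Fintype dA] [Fintype dB] [Fintype dC] [Fintype dD]
    [DecidableEq dA] [DecidableEq dB] [DecidableEq dC] [DecidableEq dD]
    (ρ : Matrix (dA × dB × dC × dD) (dA × dB × dC × dD) ℂ) (hρ : IsDensity ρ) :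
    Tsq ρ ≤ (1/2) * qcmi (Matrix.of fun (p q : dA × dD × dC) =>
      ∑ b, ρ (p.1, b, p.2.2, p.2.1) (q.1, b, q.2.2, q.2.1)) := by
  classical
  obtain ⟨hpsd, htr⟩ := hρ
  set μ : Matrix (dA × dD × dC) (dA × dD × dC) ℂ :=
    Matrix.of fun (p q : dA × dD × dC) =>
      ∑ b, ρ (p.1, b, p.2.2, p.2.1) (q.1, b, q.2.2, q.2.1) with hμdef
  set N := Fintype.card (dA × dB × dC × dD) with hN
  set eqv : (dA × dB × dC × dD) ≃ Fin N := Fintype.equivFin _ with heqv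
  set ψ : (dA × dB × dC × dD) × Fin N → ℂ := fun u => hpsd.sqrt u.1 (eqv.symm u.2) with hψ
  have keyρ : ∀ x x' : dA × dB × dC × dD,
      ∑ e : Fin N, ψ (x, e) * (starRingEnd ℂ) (ψ (x', e)) = ρ x x' := by
    intro x x'
    have h1 : ∑ e : Fin N, ψ (x, e) * (starRingEnd ℂ) (ψ (x', e))
        = ∑ y, hpsd.sqrt x y * (starRingEnd ℂ) (hpsd.sqrt x' y) :=
      Equiv.sum_comp eqv.symm
        (fun y => hpsd.sqrt x y * (starRingEnd ℂ) (hpsd.sqrt x' y))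
    rw [h1]
    exact sqrt_outer hpsd x x'
  set σ : Matrix ((dA × dB × dC × dD) × Fin N) ((dA × dB × dC × dD) × Fin N) ℂ :=
    Matrix.of fun p q => ψ p * (starRingEnd ℂ) (ψ q) with hσdef
  have hσpsd : σ.PosSemidef := posSemidef_outer ψ
  have hσtr : σ.trace = 1 := by
    have h1 : σ.trace = ∑ u : (dA × dB × dC × dD) × Fin N, ψ u * (starRingEnd ℂ) (ψ u) := rfl
    rw [h1, Fintype.sum_prod_type]
    have h2 : ∀ x : dA × dB × dC × dD,
        ∑ e : Fin N, ψ (x, e) * (starRingEnd ℂ) (ψ (x, e)) = ρ x x := fun x => keyρ x x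
    simp_rw [h2]
    exact htr
  have hσmarg : (Matrix.of fun p q => ∑ e, σ (p, e) (q, e)) = ρ := by
    ext p q
    exact keyρ p q
  -- bounded below
  have hbdd : BddBelow { t : ℝ | ∃ (nE : ℕ)
      (σ' : Matrix ((dA × dB × dC × dD) × Fin nE) ((dA × dB × dC × dD) × Fin nE) ℂ),
      IsDensity σ' ∧ (Matrix.of fun p q => ∑ e, σ' (p, e) (q, e)) = ρ ∧
      t = (1/2) * qcmiACgivenBE σ' } := by
    refine ⟨-(Real.logb 2 (Fintype.card dA)), ?_⟩
    rintro t ⟨nE, σ', ⟨hp', ht'⟩, _, rfl⟩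
    have hτpsd : (Matrix.of fun (p q : dA × (dB × Fin nE) × dC) =>
        ∑ d : dD, σ' ((p.1, p.2.1.1, p.2.2, d), p.2.1.2)
          ((q.1, q.2.1.1, q.2.2, d), q.2.1.2)).PosSemidef :=
      posSemidef_comp_sum hp'
        (fun (p : dA × (dB × Fin nE) × dC) (d : dD) =>
          (((p.1, p.2.1.1, p.2.2, d), p.2.1.2) : (dA × dB × dC × dD) × Fin nE))
    have hτtr : (Matrix.of fun (p q : dA × (dB × Fin nE) × dC) =>
        ∑ d : dD, σ' ((p.1, p.2.1.1, p.2.2, d), p.2.1.2)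
          ((q.1, q.2.1.1, q.2.2, d), q.2.1.2)).trace = 1 := by
      calc (Matrix.of fun (p q : dA × (dB × Fin nE) × dC) =>
          ∑ d : dD, σ' ((p.1, p.2.1.1, p.2.2, d), p.2.1.2)
            ((q.1, q.2.1.1, q.2.2, d), q.2.1.2)).trace
          = ∑ u : (dA × (dB × Fin nE) × dC) × dD,
              σ' ((u.1.1, u.1.2.1.1, u.1.2.2, u.2), u.1.2.1.2)
                ((u.1.1, u.1.2.1.1, u.1.2.2, u.2), u.1.2.1.2) := by
            rw [Fintype.sum_prod_type]
            rfl
        _ = ∑ v : (dA × dB × dC × dD) × Fin nE, σ' v v :=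
            Fintype.sum_equiv
              (⟨fun u => ((u.1.1, u.1.2.1.1, u.1.2.2, u.2), u.1.2.1.2),
                fun v => ((v.1.1, (v.1.2.1, v.2), v.1.2.2.1), v.1.2.2.2),
                by rintro ⟨⟨a, ⟨b, e⟩, c⟩, d⟩; rfl,
                by rintro ⟨⟨a, b, c, d⟩, e⟩; rfl⟩ :
                ((dA × (dB × Fin nE) × dC) × dD) ≃ ((dA × dB × dC × dD) × Fin nE))
              _ _ (fun u => rfl)
        _ = 1 := ht'
    have hAne : Nonempty dA := ⟨(nonempty_of_trace_one ht').some.1.1⟩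
    have hge := qcmi_ge_neg_two_logcard _ hτpsd hτtr hAne
    have h2 : qcmiACgivenBE σ' = qcmi (Matrix.of fun (p q : dA × (dB × Fin nE) × dC) =>
        ∑ d : dD, σ' ((p.1, p.2.1.1, p.2.2, d), p.2.1.2)
          ((q.1, q.2.1.1, q.2.2, d), q.2.1.2)) := rfl
    rw [h2]
    linarith
  have hmain : Tsq ρ ≤ (1/2 : ℝ) * qcmiACgivenBE σ := by
    rw [Tsq]
    exact csInf_le hbdd ⟨N, σ, ⟨hσpsd, hσtr⟩, hσmarg, rfl⟩
  -- the purification equality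
  set w1 : (dA × (dB × Fin N)) × (dD × dC) → ℂ :=
    fun u => ψ ((u.1.1, u.1.2.1, u.2.2, u.2.1), u.1.2.2) with hw1
  set w2 : ((dB × Fin N) × dC) × (dA × dD) → ℂ :=
    fun u => ψ ((u.2.1, u.1.1.1, u.1.2, u.2.2), u.1.1.2) with hw2
  set w3 : (dB × Fin N) × (dA × (dD × dC)) → ℂ :=
    fun u => ψ ((u.2.1, u.1.1, u.2.2.2, u.2.2.1), u.1.2) with hw3
  set w4 : (dA × (dB × Fin N) × dC) × dD → ℂ :=
    fun u => ψ ((u.1.1, u.1.2.1.1, u.1.2.2, u.2), u.1.2.1.2) with hw4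
  have hv1 : vnEntropy (Matrix.of fun (p q : dA × (dB × Fin N)) =>
      ∑ c, ∑ d, σ ((p.1, p.2.1, c, d), p.2.2) ((q.1, q.2.1, c, d), q.2.2))
      = vnEntropy (Matrix.of fun (p q : dD × dC) =>
        ∑ a, ∑ b, ρ (a, b, p.2, p.1) (a, b, q.2, q.1)) := by
    have hl : (Matrix.of fun (p q : dA × (dB × Fin N)) =>
        ∑ c, ∑ d, σ ((p.1, p.2.1, c, d), p.2.2) ((q.1, q.2.1, c, d), q.2.2)) = pmargL w1 := by
      ext p q
      show (∑ c, ∑ d, σ ((p.1, p.2.1, c, d), p.2.2) ((q.1, q.2.1, c, d), q.2.2))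
        = ∑ j : dD × dC, w1 (p, j) * (starRingEnd ℂ) (w1 (q, j))
      rw [Fintype.sum_prod_type]
      exact Finset.sum_comm
    have hr : pmargR w1 = (Matrix.of fun (p q : dD × dC) =>
        ∑ a, ∑ b, ρ (a, b, p.2, p.1) (a, b, q.2, q.1)) := by
      ext v v'
      show (∑ i : dA × (dB × Fin N), w1 (i, v) * (starRingEnd ℂ) (w1 (i, v')))
        = ∑ a, ∑ b, ρ (a, b, v.2, v.1) (a, b, v'.2, v'.1)
      rw [Fintype.sum_prod_type]
      apply Finset.sum_congr rfl
      intro a _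
      rw [Fintype.sum_prod_type]
      apply Finset.sum_congr rfl
      intro b _
      exact keyρ (a, b, v.2, v.1) (a, b, v'.2, v'.1)
    rw [hl, vnEntropy_pmargL_eq_pmargR w1, hr]
  have hv2 : vnEntropy (Matrix.of fun (p q : (dB × Fin N) × dC) =>
      ∑ a, ∑ d, σ ((a, p.1.1, p.2, d), p.1.2) ((a, q.1.1, q.2, d), q.1.2))
      = vnEntropy (Matrix.of fun (p q : dA × dD) =>
        ∑ c, ∑ b, ρ (p.1, b, c, p.2) (q.1, b, c, q.2)) := by
    have hl : (Matrix.of fun (p q : (dB × Fin N) × dC) =>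
        ∑ a, ∑ d, σ ((a, p.1.1, p.2, d), p.1.2) ((a, q.1.1, q.2, d), q.1.2)) = pmargL w2 := by
      ext p q
      show (∑ a, ∑ d, σ ((a, p.1.1, p.2, d), p.1.2) ((a, q.1.1, q.2, d), q.1.2))
        = ∑ j : dA × dD, w2 (p, j) * (starRingEnd ℂ) (w2 (q, j))
      rw [Fintype.sum_prod_type]
      rfl
    have hr : pmargR w2 = (Matrix.of fun (p q : dA × dD) =>
        ∑ c, ∑ b, ρ (p.1, b, c, p.2) (q.1, b, c, q.2)) := by
      ext v v'
      show (∑ i : (dB × Fin N) × dC, w2 (i, v) * (starRingEnd ℂ) (w2 (i, v')))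
        = ∑ c, ∑ b, ρ (v.1, b, c, v.2) (v'.1, b, c, v'.2)
      rw [Fintype.sum_prod_type]
      rw [Finset.sum_comm]
      apply Finset.sum_congr rfl
      intro c _
      rw [Fintype.sum_prod_type]
      apply Finset.sum_congr rfl
      intro b _
      exact keyρ (v.1, b, c, v.2) (v'.1, b, c, v'.2)
    rw [hl, vnEntropy_pmargL_eq_pmargR w2, hr]
  have hv3 : vnEntropy (Matrix.of fun (b b' : dB × Fin N) =>
      ∑ a, ∑ c, ∑ d, σ ((a, b.1, c, d), b.2) ((a, b'.1, c, d), b'.2))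
      = vnEntropy μ := by
    have hl : (Matrix.of fun (b b' : dB × Fin N) =>
        ∑ a, ∑ c, ∑ d, σ ((a, b.1, c, d), b.2) ((a, b'.1, c, d), b'.2)) = pmargL w3 := by
      ext b b'
      show (∑ a, ∑ c, ∑ d, σ ((a, b.1, c, d), b.2) ((a, b'.1, c, d), b'.2))
        = ∑ j : dA × (dD × dC), w3 (b, j) * (starRingEnd ℂ) (w3 (b', j))
      rw [Fintype.sum_prod_type]
      apply Finset.sum_congr rfl
      intro a _
      rw [Fintype.sum_prod_type]
      exact Finset.sum_comm
    have hr : pmargR w3 = μ := by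
      ext v v'
      show (∑ i : dB × Fin N, w3 (i, v) * (starRingEnd ℂ) (w3 (i, v')))
        = ∑ b, ρ (v.1, b, v.2.2, v.2.1) (v'.1, b, v'.2.2, v'.2.1)
      rw [Fintype.sum_prod_type]
      apply Finset.sum_congr rfl
      intro b _
      exact keyρ (v.1, b, v.2.2, v.2.1) (v'.1, b, v'.2.2, v'.2.1)
    rw [hl, vnEntropy_pmargL_eq_pmargR w3, hr]
  have hv4 : vnEntropy (Matrix.of fun (p q : dA × (dB × Fin N) × dC) =>
      ∑ d : dD, σ ((p.1, p.2.1.1, p.2.2, d), p.2.1.2) ((q.1, q.2.1.1, q.2.2, d), q.2.1.2))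
      = vnEntropy (Matrix.of fun (d d' : dD) =>
        ∑ a, ∑ c, ∑ b, ρ (a, b, c, d) (a, b, c, d')) := by
    have hl : (Matrix.of fun (p q : dA × (dB × Fin N) × dC) =>
        ∑ d : dD, σ ((p.1, p.2.1.1, p.2.2, d), p.2.1.2)
          ((q.1, q.2.1.1, q.2.2, d), q.2.1.2)) = pmargL w4 := by
      ext p q
      rfl
    have hr : pmargR w4 = (Matrix.of fun (d d' : dD) =>
        ∑ a, ∑ c, ∑ b, ρ (a, b, c, d) (a, b, c, d')) := by
      ext d d'
      show (∑ i : dA × (dB × Fin N) × dC, w4 (i, d) * (starRingEnd ℂ) (w4 (i, d')))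
        = ∑ a, ∑ c, ∑ b, ρ (a, b, c, d) (a, b, c, d')
      rw [Fintype.sum_prod_type]
      apply Finset.sum_congr rfl
      intro a _
      rw [Fintype.sum_prod_type]
      rw [Finset.sum_comm]
      apply Finset.sum_congr rfl
      intro c _
      rw [Fintype.sum_prod_type]
      apply Finset.sum_congr rfl
      intro b _
      exact keyρ (a, b, c, d) (a, b, c, d')
    rw [hl, vnEntropy_pmargL_eq_pmargR w4, hr]
  have heq : qcmiACgivenBE σ = qcmi μ := by
    show vnEntropy (Matrix.of fun (p q : dA × (dB × Fin N)) =>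
        ∑ c, ∑ d, σ ((p.1, p.2.1, c, d), p.2.2) ((q.1, q.2.1, c, d), q.2.2))
      + vnEntropy (Matrix.of fun (p q : (dB × Fin N) × dC) =>
        ∑ a, ∑ d, σ ((a, p.1.1, p.2, d), p.1.2) ((a, q.1.1, q.2, d), q.1.2))
      - vnEntropy (Matrix.of fun (b b' : dB × Fin N) =>
        ∑ a, ∑ c, ∑ d, σ ((a, b.1, c, d), b.2) ((a, b'.1, c, d), b'.2))
      - vnEntropy (Matrix.of fun (p q : dA × (dB × Fin N) × dC) =>
        ∑ d : dD, σ ((p.1, p.2.1.1, p.2.2, d), p.2.1.2) ((q.1, q.2.1.1, q.2.2, d), q.2.1.2))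
      = vnEntropy (Matrix.of fun (p q : dA × dD) =>
        ∑ c, ∑ b, ρ (p.1, b, c, p.2) (q.1, b, c, q.2))
      + vnEntropy (Matrix.of fun (p q : dD × dC) =>
        ∑ a, ∑ b, ρ (a, b, p.2, p.1) (a, b, q.2, q.1))
      - vnEntropy (Matrix.of fun (d d' : dD) =>
        ∑ a, ∑ c, ∑ b, ρ (a, b, c, d) (a, b, c, d'))
      - vnEntropy μ
    rw [hv1, hv2, hv3, hv4]
    ring
  calc Tsq ρ ≤ (1/2 : ℝ) * qcmiACgivenBE σ := hmain
    _ = (1/2 : ℝ) * qcmi μ := by rw [heq]
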